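/- Let d(n) = det(a_{i+j})_{i,j=0}^{n-1}, α(n) = 2^{⌈log₂ n⌉} - 1 and β(n) = 2n - 1 - α(n). Then for n ≥ 1, d(n) = (-1)^(β(n) choose 2) · x_{α(n)}^{β(n)} · d(n - β(n)). -/

import Mathlib

set_option maxHeartbeats 1000000

open Equiv Finset


lemma sign_rev_aux (k : ℕ) :
    Equiv.Perm.sign (Fin.revPerm : Equiv.Perm (Fin k)) = (-1) ^ (k.choose 2) := by
  induction k with
  | zero =>
    have h : (Fin.revPerm : Equiv.Perm (Fin 0)) = 1 := Equiv.ext fun i => i.elim0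
    simp [h]
  | succ k ih =>
    set f : Fin k ≃ {x : Fin (k+1) // (x : ℕ) < k} :=
      { toFun := fun i => ⟨Fin.castSucc i, by simp [Fin.is_lt]⟩
        invFun := fun y => ⟨(y : Fin (k+1)), y.2⟩
        left_inv := fun i => by ext; simp
        right_inv := fun y => by ext; simp } with hf
    have hdecomp : (Fin.revPerm : Equiv.Perm (Fin (k+1))) =
        finRotate (k+1) * Equiv.Perm.extendDomain (Fin.revPerm : Equiv.Perm (Fin k)) f := by
      apply Equiv.ext
      intro x
      rw [Equiv.Perm.mul_apply]
      by_cases hx : (x : ℕ) < k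
      · rw [Equiv.Perm.extendDomain_apply_subtype _ f hx]
        apply Fin.ext
        have h1 : ((f (Fin.revPerm (f.symm ⟨x, hx⟩)) : Fin (k+1)) : ℕ) = k - (x + 1) := by
          simp [hf, Fin.val_rev]
        rw [coe_finRotate]
        have hlast : (f (Fin.revPerm (f.symm ⟨x, hx⟩)) : Fin (k+1)) ≠ Fin.last k := by
          intro hcon
          rw [Fin.ext_iff] at hcon
          rw [h1] at hcon
          simp at hcon
          omega
        rw [if_neg hlast, h1]
        simp only [Fin.revPerm_apply, Fin.val_rev]
        omega
      · rw [Equiv.Perm.extendDomain_apply_not_subtype _ f hx]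
        apply Fin.ext
        have hxl : x = Fin.last k := by
          apply Fin.ext; have := x.is_lt; simp; omega
        rw [hxl]
        simp only [Fin.revPerm_apply, Fin.val_rev, Fin.val_last]
        rw [coe_finRotate]
        simp
    rw [hdecomp, map_mul, sign_finRotate, Equiv.Perm.sign_extendDomain, ih]
    rw [Nat.choose_succ_succ, Nat.choose_one_right, pow_add]
    rfl


-- key numeric lemma
lemma pow_force (c n s : ℕ) (hc : 1 ≤ c) (hn1 : 2^(c-1) < n) (hn2 : n ≤ 2^c)
    (hs1 : 2^(c-1) ≤ s) (hs2 : s < 2*n - 1) (hk : ∃ k, s + 1 = 2^k) : s + 1 = 2^c := by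
  obtain ⟨k, hk⟩ := hk
  have h1 : 2^(c-1) < 2^k := by omega
  have h2 : c - 1 < k := (Nat.pow_lt_pow_iff_right (by norm_num)).mp h1
  have h3 : 2^k < 2^(c+1) := by
    have : 2^(c+1) = 2 * 2^c := by ring
    omega
  have h4 : k < c + 1 := (Nat.pow_lt_pow_iff_right (by norm_num)).mp h3
  have hkc : k = c := by omega
  subst hkc
  omega

lemma forcing (c n : ℕ) (hc : 1 ≤ c) (hn1 : 2^(c-1) < n) (hn2 : n ≤ 2^c)
    (σ : Equiv.Perm (Fin n)) (H : ∀ i : Fin n, ∃ k, ((σ i : ℕ) + i) + 1 = 2^k) :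
    ∀ i : Fin n, 2^c - n ≤ (i : ℕ) → ((σ i : ℕ) + i) + 1 = 2^c := by
  have hq : 2 * 2^(c-1) = 2^c := by
    conv_rhs => rw [show c = (c-1)+1 by omega]
    ring
  have hA : ∀ i : Fin n, 2^(c-1) ≤ (i : ℕ) → ((σ i : ℕ) + i) + 1 = 2^c := by
    intro i hi
    refine pow_force c n _ hc hn1 hn2 (by omega) ?_ (H i)
    have := (σ i).is_lt
    have := i.is_lt
    omega
  have hB : ∀ j : Fin n, 2^(c-1) ≤ (j : ℕ) → ((σ.symm j : ℕ) + j) + 1 = 2^c := by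
    intro j hj
    have h := H (σ.symm j)
    rw [Equiv.apply_symm_apply] at h
    obtain ⟨k, hk⟩ := h
    refine pow_force c n _ hc hn1 hn2 (by omega) ?_ ⟨k, by omega⟩
    have := (σ.symm j).is_lt
    have := j.is_lt
    omega
  intro i hi
  by_cases hq2 : 2^(c-1) ≤ (i : ℕ)
  · exact hA i hq2
  · push_neg at hq2
    have hjlt : 2^c - 1 - (i : ℕ) < n := by omega
    set j : Fin n := ⟨2^c - 1 - (i : ℕ), hjlt⟩ with hjdef
    have hjge : 2^(c-1) ≤ (j : ℕ) := by
      simp only [hjdef]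
      omega
    have hB' := hB j hjge
    have hji : σ.symm j = i := by
      apply Fin.ext
      simp only [hjdef] at hB' ⊢
      omega
    have : σ i = j := by rw [← hji, Equiv.apply_symm_apply]
    rw [this]
    simp only [hjdef]
    omega

open Classical in
theorem hankel_step {R : Type*} [CommRing R] (x a : ℕ → R)
    (ha : ∀ n, a n = if ∃ k : ℕ, n + 1 = 2 ^ k then x n else 0)
    (c n : ℕ) (hc : 1 ≤ c) (hn1 : 2^(c-1) < n) (hn2 : n ≤ 2^c) :
    Matrix.det (Matrix.of fun i j : Fin n => a ((i:ℕ) + j)) =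
      (-1 : R) ^ ((2*n - 2^c).choose 2) * x (2^c - 1) ^ (2*n - 2^c) *
      Matrix.det (Matrix.of fun i j : Fin (2^c - n) => a ((i:ℕ) + j)) := by
  classical
  have hp2 : 2^c = 2 * 2^(c-1) := by
    conv_lhs => rw [show c = (c-1)+1 by omega]
    ring
  set p := 2^c with hp
  set m := p - n with hm
  set b := 2*n - p with hb
  have hmb : m + b = n := by omega
  have hmn : m + n = p := by omega
  have hb1 : 1 ≤ b := by omega
  have hp1 : 1 ≤ p := by omega
  have hpc : ∃ k, p - 1 + 1 = 2 ^ k := ⟨c, by omega⟩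
  clear_value p
  clear_value m
  clear_value b
  set e : Fin m ⊕ Fin b ≃ Fin n := finSumFinEquiv.trans (finCongr hmb) with he
  have he1 : ∀ i : Fin m, ((e (Sum.inl i)) : ℕ) = (i : ℕ) := by
    intro i; simp [he]
  have he2 : ∀ j : Fin b, ((e (Sum.inr j)) : ℕ) = m + (j : ℕ) := by
    intro j; simp [he]
  clear_value e
  set Φ : Equiv.Perm (Fin m) → Equiv.Perm (Fin n) :=
    fun π => e.permCongr (Equiv.sumCongr π (Fin.revPerm : Equiv.Perm (Fin b))) with hΦdef
  have hΦ : ∀ π y, Φ π (e y) = e ((Equiv.sumCongr π (Fin.revPerm : Equiv.Perm (Fin b))) y) := by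
    intro π y
    simp [hΦdef, Equiv.permCongr_apply]
  have hF1 : ∀ π (i : Fin m), ((Φ π (e (Sum.inl i))) : ℕ) = (π i : ℕ) := by
    intro π i
    rw [hΦ]
    simp [he1]
  have hF2 : ∀ π (j : Fin b), ((Φ π (e (Sum.inr j))) : ℕ) = m + (b - 1 - (j : ℕ)) := by
    intro π j
    rw [hΦ]
    simp only [Equiv.sumCongr_apply, Sum.map_inr, he2, Fin.revPerm_apply, Fin.val_rev]
    omega
  clear_value Φ
  set Q : Equiv.Perm (Fin n) → Prop := fun σ => ∀ i : Fin n, m ≤ (i : ℕ) → ((σ i : ℕ) + i) + 1 = p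
    with hQdef
  have hQΦ : ∀ π, Q (Φ π) := by
    intro π z hz
    have hzlt : (z : ℕ) - m < b := by have := z.is_lt; omega
    have hvv : ((⟨(z : ℕ) - m, hzlt⟩ : Fin b) : ℕ) = (z : ℕ) - m := rfl
    have hze : e (Sum.inr ⟨(z : ℕ) - m, hzlt⟩) = z := by
      apply Fin.ext
      rw [he2, hvv]
      omega
    rw [← hze, hF2, he2, hvv]
    omega
  rw [Matrix.det_apply' (Matrix.of fun i j : Fin n => a ((i:ℕ) + j))]
  have hvanish : ∀ σ ∈ (univ : Finset (Equiv.Perm (Fin n))),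
      (((Equiv.Perm.sign σ : ℤ) : R) * ∏ i, (Matrix.of fun i j : Fin n => a ((i:ℕ) + j)) (σ i) i) ≠ 0
      → Q σ := by
    intro σ _ hne
    by_cases hH : ∀ i : Fin n, ∃ k, ((σ i : ℕ) + i) + 1 = 2^k
    · intro i hi
      have hres := forcing c n hc hn1 (hp ▸ hn2) σ hH i (by rw [hm, hp] at hi; exact hi)
      rw [hp]
      exact hres
    · exfalso
      apply hne
      push_neg at hH
      obtain ⟨i, hi⟩ := hH
      have hz : (Matrix.of fun i j : Fin n => a ((i:ℕ) + j)) (σ i) i = 0 := by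
        show a ((σ i : ℕ) + i) = 0
        rw [ha]
        rw [if_neg]
        rintro ⟨k, hk⟩
        exact hi k (by omega)
      exact mul_eq_zero_of_right _ (Finset.prod_eq_zero (Finset.mem_univ i) hz)
  rw [← Finset.sum_filter_of_ne hvanish]
  -- reindex by Perm (Fin m)
  have hmem : ∀ π ∈ (univ : Finset (Equiv.Perm (Fin m))), Φ π ∈ univ.filter Q := by
    intro π _
    exact Finset.mem_filter.mpr ⟨Finset.mem_univ _, hQΦ π⟩
  have hinj2 : ∀ π1 ∈ (univ : Finset (Equiv.Perm (Fin m))),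
      ∀ π2 ∈ (univ : Finset (Equiv.Perm (Fin m))), Φ π1 = Φ π2 → π1 = π2 := by
    intro π1 _ π2 _ hval
    apply Equiv.ext
    intro i
    have h1 := congrArg (fun (σ : Equiv.Perm (Fin n)) => σ (e (Sum.inl i))) hval
    rw [hΦ, hΦ] at h1
    have h2 := e.injective h1
    simpa using h2
  have hsurj : ∀ σ ∈ univ.filter Q, ∃ π, ∃ (_ : π ∈ (univ : Finset (Equiv.Perm (Fin m)))),
      Φ π = σ := by
    intro σ hσ
    have hQσ : Q σ := (Finset.mem_filter.mp hσ).2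
    have hmlen : m ≤ n := by omega
    have hlt : ∀ z : Fin n, (z : ℕ) < m → ((σ z : ℕ)) < m := by
      intro z hzm
      by_contra hge
      push_neg at hge
      have hz2 : ((σ z : ℕ)) < n := (σ z).is_lt
      obtain ⟨w, hw⟩ : ∃ w, w + (σ z : ℕ) + 1 = p := ⟨p - 1 - (σ z : ℕ), by omega⟩
      have hi'lt : w < n := by omega
      have hvv2 : ((⟨w, hi'lt⟩ : Fin n) : ℕ) = w := rfl
      have h1 : m ≤ ((⟨w, hi'lt⟩ : Fin n) : ℕ) := by rw [hvv2]; omega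
      have h2 := hQσ _ h1
      have h3 : σ ⟨w, hi'lt⟩ = σ z := by
        apply Fin.ext
        omega
      have h4 := σ.injective h3
      have h4' : w = (z : ℕ) := congrArg Fin.val h4
      omega
    have hinj : Function.Injective
        (fun i : Fin m => (⟨(σ ⟨(i : ℕ), by omega⟩ : Fin n), hlt _ i.is_lt⟩ : Fin m)) := by
      intro i1 i2 h12
      have h12' : ((σ ⟨(i1 : ℕ), by omega⟩ : Fin n) : ℕ) = ((σ ⟨(i2 : ℕ), by omega⟩ : Fin n) : ℕ) :=
        congrArg (fun t : Fin m => (t : ℕ)) h12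
      have h13 : σ ⟨(i1 : ℕ), by omega⟩ = σ ⟨(i2 : ℕ), by omega⟩ := Fin.ext h12'
      have h14 := σ.injective h13
      have h14' : (i1 : ℕ) = (i2 : ℕ) := congrArg (fun t : Fin n => t.val) h14
      exact Fin.ext h14'
    set π : Equiv.Perm (Fin m) :=
      Equiv.ofBijective _ (Finite.injective_iff_bijective.mp hinj) with hπ
    have hπval : ∀ i : Fin m, ((π i : ℕ)) = ((σ ⟨(i : ℕ), by omega⟩ : Fin n) : ℕ) := by
      intro i
      rw [hπ]
      rfl
    refine ⟨π, Finset.mem_univ _, ?_⟩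
    apply Equiv.ext
    intro z
    obtain ⟨y, rfl⟩ := e.surjective z
    cases y with
    | inl i =>
      apply Fin.ext
      rw [hF1, hπval]
      exact congrArg (fun t : Fin n => ((σ t : Fin n) : ℕ)) (Fin.ext ((he1 i).symm))
    | inr j =>
      apply Fin.ext
      rw [hF2]
      have h5 : m ≤ ((e (Sum.inr j) : ℕ)) := by rw [he2]; omega
      have h6 := hQσ _ h5
      rw [he2] at h6
      have := j.is_lt
      omega
  have hbij := Finset.sum_bij (s := (univ : Finset (Equiv.Perm (Fin m))))
    (t := univ.filter Q)
    (f := fun π => ((Equiv.Perm.sign (Φ π) : ℤ) : R) *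
        ∏ i, (Matrix.of fun i j : Fin n => a ((i:ℕ) + j)) ((Φ π) i) i)
    (g := fun σ => ((Equiv.Perm.sign σ : ℤ) : R) *
        ∏ i, (Matrix.of fun i j : Fin n => a ((i:ℕ) + j)) (σ i) i)
    (i := fun π _ => Φ π) hmem hinj2 hsurj (fun π _ => rfl)
  rw [← hbij]
  -- compute each term
  have hterm : ∀ π : Equiv.Perm (Fin m),
      ((Equiv.Perm.sign (Φ π) : ℤ) : R) *
        ∏ i, (Matrix.of fun i j : Fin n => a ((i:ℕ) + j)) ((Φ π) i) i
      = ((-1 : R) ^ (b.choose 2) * x (p - 1) ^ b) *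
        (((Equiv.Perm.sign π : ℤ) : R) *
          ∏ i, (Matrix.of fun i j : Fin m => a ((i:ℕ) + j)) (π i) i) := by
    intro π
    have hsign : ((Equiv.Perm.sign (Φ π) : ℤ) : R)
        = (-1 : R) ^ (b.choose 2) * ((Equiv.Perm.sign π : ℤ) : R) := by
      rw [hΦdef]
      simp only [Equiv.Perm.sign_permCongr, Equiv.Perm.sign_sumCongr, sign_rev_aux]
      push_cast
      ring
    have hprod : (∏ i, (Matrix.of fun i j : Fin n => a ((i:ℕ) + j)) ((Φ π) i) i)
        = (∏ i, (Matrix.of fun i j : Fin m => a ((i:ℕ) + j)) (π i) i) * x (p - 1) ^ b := by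
      rw [← Equiv.prod_comp e
        (fun i => (Matrix.of fun i j : Fin n => a ((i:ℕ) + j)) ((Φ π) i) i)]
      rw [Fintype.prod_sum_type]
      congr 1
      · apply Finset.prod_congr rfl
        intro i _
        show a (((Φ π) (e (Sum.inl i)) : ℕ) + (e (Sum.inl i) : ℕ)) = a (((π i : ℕ)) + i)
        rw [hF1, he1]
      · have hcard : ∀ j : Fin b,
            (Matrix.of fun i j : Fin n => a ((i:ℕ) + j)) ((Φ π) (e (Sum.inr j))) (e (Sum.inr j))
            = x (p - 1) := by
          intro j
          show a (((Φ π) (e (Sum.inr j)) : ℕ) + (e (Sum.inr j) : ℕ)) = x (p - 1)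
          rw [hF2, he2]
          have hj := j.is_lt
          have harg : m + (b - 1 - (j : ℕ)) + (m + (j : ℕ)) = p - 1 := by omega
          rw [harg, ha]
          rw [if_pos (show ∃ k, p - 1 + 1 = 2 ^ k from hpc)]
        rw [Finset.prod_congr rfl (fun j _ => hcard j)]
        rw [Finset.prod_const]
        rw [Finset.card_univ, Fintype.card_fin]
    rw [hsign, hprod]
    ring
  rw [Finset.sum_congr rfl (fun π _ => hterm π)]
  rw [← Finset.mul_sum]
  rw [Matrix.det_apply']


open Classical in
theorem stmt15 {R : Type*} [CommRing R] (x : ℕ → R)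
    (a : ℕ → R) (ha : ∀ n, a n = if ∃ k : ℕ, n + 1 = 2 ^ k then x n else 0)
    (d : ℕ → R) (hd : ∀ n, d n = Matrix.det (Matrix.of fun i j : Fin n => a ((i : ℕ) + j)))
    (α β : ℕ → ℕ) (hα : ∀ n, α n = 2 ^ (Nat.clog 2 n) - 1)
    (hβ : ∀ n, β n = 2 * n - 1 - α n)
    (n : ℕ) (hn : 1 ≤ n) :
    d n = (-1 : R) ^ ((β n).choose 2) * x (α n) ^ (β n) * d (n - β n) := by
  by_cases h1 : n = 1
  · subst h1
    have hα1 : α 1 = 0 := by rw [hα]; simp [Nat.clog_one_right]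
    have hβ1 : β 1 = 1 := by rw [hβ, hα1]
    have hd1 : d 1 = x 0 := by
      rw [hd]
      rw [Matrix.det_fin_one]
      show a (0 + 0) = x 0
      rw [ha]
      rw [if_pos ⟨0, by norm_num⟩]
    have hd0 : d (1 - β 1) = 1 := by
      rw [hβ1, hd]
      exact Matrix.det_fin_zero
    rw [hd1, hd0, hα1, hβ1]
    norm_num
  · have hn2' : 2 ≤ n := by omega
    set c := Nat.clog 2 n with hcdef
    have hc : 1 ≤ c := Nat.clog_pos (by norm_num) (by omega)
    have hn2 : n ≤ 2 ^ c := Nat.le_pow_clog (by norm_num) n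
    have hn1 : 2 ^ (c - 1) < n := Nat.pow_pred_clog_lt_self (by norm_num) (by omega)
    have hp2 : 2 ^ c = 2 * 2 ^ (c - 1) := by
      conv_lhs => rw [show c = (c - 1) + 1 by omega]
      ring
    have hα' : α n = 2 ^ c - 1 := hα n
    have hβ' : β n = 2 * n - 2 ^ c := by rw [hβ n, hα n, ← hcdef]; omega
    have hnb : n - β n = 2 ^ c - n := by rw [hβ']; omega
    rw [hd n, hnb, hd (2 ^ c - n), hα', hβ']
    exact hankel_step x a ha c n hc hn1 hn2
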